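/- Let X be a differentiable family of Hermitian rank-1 projectors, X = (x ⊗ x†)/(x† x) for a nonvanishing differentiable vector x. Then x is holomorphic in ℂPᴺ⁻¹ (∂₋x proportional to x) if and only if X·(∂₊X) = 0, which is also equivalent to (∂₋X)·X = 0. -/

import Mathlib

open Matrix

/-- Entrywise partial derivative of a vector family in the first real coordinate. -/
noncomputable def vpd1 {N : ℕ} (f : ℝ × ℝ → Fin N → ℂ) (p : ℝ × ℝ) : Fin N → ℂ :=
  fun i => fderiv ℝ (fun q => f q i) p (1, 0)

/-- Entrywise partial derivative of a vector family in the second real coordinate. -/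
noncomputable def vpd2 {N : ℕ} (f : ℝ × ℝ → Fin N → ℂ) (p : ℝ × ℝ) : Fin N → ℂ :=
  fun i => fderiv ℝ (fun q => f q i) p (0, 1)

/-- `∂₋ = (∂₁ + i∂₂)/2` for vector families. -/
noncomputable def vpdm {N : ℕ} (f : ℝ × ℝ → Fin N → ℂ) (p : ℝ × ℝ) : Fin N → ℂ :=
  ((1 : ℂ) / 2) • (vpd1 f p + Complex.I • vpd2 f p)

/-- Entrywise partial derivative of a matrix family in the first real coordinate. -/
noncomputable def pd1 {N : ℕ} (f : ℝ × ℝ → Matrix (Fin N) (Fin N) ℂ) (p : ℝ × ℝ) :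
    Matrix (Fin N) (Fin N) ℂ :=
  Matrix.of fun i j => fderiv ℝ (fun q => f q i j) p (1, 0)

/-- Entrywise partial derivative of a matrix family in the second real coordinate. -/
noncomputable def pd2 {N : ℕ} (f : ℝ × ℝ → Matrix (Fin N) (Fin N) ℂ) (p : ℝ × ℝ) :
    Matrix (Fin N) (Fin N) ℂ :=
  Matrix.of fun i j => fderiv ℝ (fun q => f q i j) p (0, 1)

/-- `∂₊ = (∂₁ - i∂₂)/2` for matrix families. -/
noncomputable def pdp {N : ℕ} (f : ℝ × ℝ → Matrix (Fin N) (Fin N) ℂ) (p : ℝ × ℝ) :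
    Matrix (Fin N) (Fin N) ℂ :=
  ((1 : ℂ) / 2) • (pd1 f p - Complex.I • pd2 f p)

/-- `∂₋ = (∂₁ + i∂₂)/2` for matrix families. -/
noncomputable def pdm {N : ℕ} (f : ℝ × ℝ → Matrix (Fin N) (Fin N) ℂ) (p : ℝ × ℝ) :
    Matrix (Fin N) (Fin N) ℂ :=
  ((1 : ℂ) / 2) • (pd1 f p + Complex.I • pd2 f p)

open ComplexConjugate

lemma aux_r_ne {N : ℕ} (v : Fin N → ℂ) (h : v ≠ 0) : star v ⬝ᵥ v ≠ 0 := by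
  have : star v ⬝ᵥ v = ((∑ k, Complex.normSq (v k) : ℝ) : ℂ) := by
    push_cast
    simp [dotProduct, ← Complex.normSq_eq_conj_mul_self]
  rw [this]
  norm_cast
  intro hc
  apply h
  funext k
  have := (Finset.sum_eq_zero_iff_of_nonneg (fun i _ => Complex.normSq_nonneg (v i))).mp hc k
    (Finset.mem_univ k)
  simpa using this

lemma aux_r_conj {N : ℕ} (v : Fin N → ℂ) : (starRingEnd ℂ) (star v ⬝ᵥ v) = star v ⬝ᵥ v := by
  simp [dotProduct, map_sum]
  exact Finset.sum_congr rfl fun k _ => by ring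

lemma aux_key {N : ℕ} (x : ℝ × ℝ → Fin N → ℂ)
    (hdiff : ∀ i, Differentiable ℝ fun q => x q i)
    (hx : ∀ p, x p ≠ 0)
    (X : ℝ × ℝ → Matrix (Fin N) (Fin N) ℂ)
    (hX : ∀ p, X p = (star (x p) ⬝ᵥ x p)⁻¹ • vecMulVec (x p) (star (x p))) (p : ℝ × ℝ)
    (hr0 : star (x p) ⬝ᵥ x p ≠ 0) (hrc : conj (star (x p) ⬝ᵥ x p) = star (x p) ⬝ᵥ x p) :
    (∀ i j, (X p * pdp X p) i j =
      (star (x p) ⬝ᵥ x p)⁻¹ * x p i *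
        (conj (vpdm x p j) - (star (x p) ⬝ᵥ x p)⁻¹ * conj (star (x p) ⬝ᵥ vpdm x p)
          * conj (x p j))) ∧
    (∀ i j, (pdm X p * X p) i j =
      (star (x p) ⬝ᵥ x p)⁻¹ * conj (x p j) *
        (vpdm x p i - (star (x p) ⬝ᵥ x p)⁻¹ * (star (x p) ⬝ᵥ vpdm x p) * x p i)) := by
  set r : ℂ := star (x p) ⬝ᵥ x p with hrdef
  set L : Fin N → (ℝ × ℝ) →L[ℝ] ℂ := fun i => fderiv ℝ (fun q => x q i) p with hLdef
  have hL : ∀ i, HasFDerivAt (fun q => x q i) (L i) p := fun i => ((hdiff i) p).hasFDerivAt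
  set C : Fin N → (ℝ × ℝ) →L[ℝ] ℂ :=
    fun j => (((starL' ℝ : ℂ ≃L[ℝ] ℂ) : ℂ →L[ℝ] ℂ)).comp (L j) with hCdef
  have hC : ∀ j, HasFDerivAt (fun q => star (x q j)) (C j) p := fun j => (hL j).star
  have hCv : ∀ j v, C j v = conj (L j v) := fun j v => rfl
  set R : (ℝ × ℝ) →L[ℝ] ℂ := ∑ k, (star (x p k) • L k + x p k • C k) with hRdef
  have hR : HasFDerivAt (fun q => star (x q) ⬝ᵥ x q) R p := by
    have he : (fun q => star (x q) ⬝ᵥ x q) = fun q => ∑ k, star (x q k) * x q k := by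
      funext q; simp [dotProduct]
    rw [he]
    exact HasFDerivAt.fun_sum fun k _ => ((hL k).star.mul (hL k))
  have hRv : ∀ v, R v = ∑ k, (conj (x p k) * L k v + x p k * conj (L k v)) := by
    intro v
    simp [hRdef, ContinuousLinearMap.sum_apply, hCv, Complex.star_def, mul_comm]
  set Iv : (ℝ × ℝ) →L[ℝ] ℂ :=
    (((1 : ℂ →L[ℂ] ℂ).smulRight (-(r ^ 2)⁻¹)).restrictScalars ℝ).comp R with hIdef
  have hInv : HasFDerivAt (fun q => (star (x q) ⬝ᵥ x q)⁻¹) Iv p :=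
    (((hasDerivAt_inv hr0).hasFDerivAt).restrictScalars ℝ).comp p hR
  have hIvv : ∀ v, Iv v = -(r ^ 2)⁻¹ * R v := by
    intro v; simp [hIdef]; ring
  -- the full derivative of each entry
  set M : Fin N → Fin N → (ℝ × ℝ) →L[ℝ] ℂ := fun i j =>
    r⁻¹ • (x p i • C j + star (x p j) • L i) + (x p i * star (x p j)) • Iv with hMdef
  have hfd : ∀ i j, fderiv ℝ (fun q => X q i j) p = M i j := by
    intro i j
    have hXE : (fun q => X q i j) = fun q => (star (x q) ⬝ᵥ x q)⁻¹ * (x q i * star (x q j)) := by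
      funext q; rw [hX q]; simp [vecMulVec_apply, Matrix.smul_apply]
    rw [hXE]
    exact (hInv.mul ((hL i).mul (hC j))).fderiv
  have hMv : ∀ i j v, M i j v = r⁻¹ * (x p i * conj (L j v) + conj (x p j) * L i v)
      + (x p i * conj (x p j)) * (-(r ^ 2)⁻¹ * R v) := by
    intro i j v
    simp [hMdef, ContinuousLinearMap.add_apply, ContinuousLinearMap.smul_apply, hCv, hIvv,
      Complex.star_def]
    ring
  -- value abbreviations
  have hy : ∀ i, vpdm x p i = (1 / 2 : ℂ) * (L i (1, 0) + Complex.I * L i (0, 1)) := by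
    intro i
    simp [vpdm, vpd1, vpd2, hLdef]
  have hcy : ∀ j, conj (vpdm x p j)
      = (1 / 2 : ℂ) * (conj (L j (1, 0)) - Complex.I * conj (L j (0, 1))) := by
    intro j
    rw [hy j]
    simp only [_root_.map_mul, _root_.map_add, map_div₀, _root_.map_one, _root_.map_ofNat, Complex.conj_I]
    ring
  set z : Fin N → ℂ := fun i => (1 / 2 : ℂ) * (L i (1, 0) - Complex.I * L i (0, 1)) with hzdef
  set zc : Fin N → ℂ := fun j =>
    (1 / 2 : ℂ) * (conj (L j (1, 0)) + Complex.I * conj (L j (0, 1))) with hzcdef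
  set S : ℂ := star (x p) ⬝ᵥ vpdm x p with hSdef
  have hS : S = ∑ k, conj (x p k) * vpdm x p k := by simp [hSdef, dotProduct, Complex.star_def]
  have hSc : conj S = ∑ k, x p k * conj (vpdm x p k) := by
    rw [hS, map_sum]
    exact Finset.sum_congr rfl fun k _ => by rw [_root_.map_mul, Complex.conj_conj]
  set Sm : ℂ := ∑ k, conj (x p k) * z k with hSmdef
  have hSmc : conj Sm = ∑ k, zc k * x p k := by
    rw [hSmdef, map_sum]
    refine Finset.sum_congr rfl fun k _ => ?_
    rw [_root_.map_mul, Complex.conj_conj]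
    simp only [hzdef, hzcdef, _root_.map_mul, _root_.map_sub, map_div₀, _root_.map_one, _root_.map_ofNat,
      Complex.conj_I]
    ring
  set Wp : ℂ := (1 / 2 : ℂ) * (R (1, 0) - Complex.I * R (0, 1)) with hWpdef
  set Wm : ℂ := (1 / 2 : ℂ) * (R (1, 0) + Complex.I * R (0, 1)) with hWmdef
  have hWp : Wp = Sm + conj S := by
    rw [hWpdef, hRv, hRv, hSc, hSmdef]
    rw [Finset.mul_sum, ← Finset.sum_sub_distrib, Finset.mul_sum, ← Finset.sum_add_distrib]
    refine Finset.sum_congr rfl fun k _ => ?_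
    rw [hcy k]
    simp only [hzdef]
    ring
  have hWm : Wm = S + conj Sm := by
    rw [hWmdef, hRv, hRv, hS, hSmc, ← Finset.sum_add_distrib]
    rw [Finset.mul_sum, ← Finset.sum_add_distrib, Finset.mul_sum]
    refine Finset.sum_congr rfl fun k _ => ?_
    rw [hy k]
    simp only [hzcdef]
    ring
  -- entry formulas for pdp and pdm
  have hpdp : ∀ i j, pdp X p i j = x p i * conj (x p j) * (-(r ^ 2)⁻¹ * Wp)
      + r⁻¹ * (x p i * conj (vpdm x p j) + conj (x p j) * z i) := by
    intro i j
    have e1 : pd1 X p i j = M i j (1, 0) := by rw [pd1, Matrix.of_apply, hfd]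
    have e2 : pd2 X p i j = M i j (0, 1) := by rw [pd2, Matrix.of_apply, hfd]
    have : pdp X p i j = (1 / 2 : ℂ) * (pd1 X p i j - Complex.I * pd2 X p i j) := by
      simp [pdp, Matrix.smul_apply, Matrix.sub_apply]
    rw [this, e1, e2, hMv, hMv, hcy j]
    simp only [hzdef, hWpdef]
    ring
  have hpdm : ∀ i j, pdm X p i j = x p i * conj (x p j) * (-(r ^ 2)⁻¹ * Wm)
      + r⁻¹ * (x p i * zc j + conj (x p j) * vpdm x p i) := by
    intro i j
    have e1 : pd1 X p i j = M i j (1, 0) := by rw [pd1, Matrix.of_apply, hfd]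
    have e2 : pd2 X p i j = M i j (0, 1) := by rw [pd2, Matrix.of_apply, hfd]
    have : pdm X p i j = (1 / 2 : ℂ) * (pd1 X p i j + Complex.I * pd2 X p i j) := by
      simp [pdm, Matrix.smul_apply, Matrix.add_apply]
    rw [this, e1, e2, hMv, hMv, hy i]
    simp only [hzcdef, hWmdef]
    ring
  have hXv : ∀ i j, X p i j = r⁻¹ * (x p i * conj (x p j)) := by
    intro i j
    rw [hX p]
    simp [vecMulVec_apply, Matrix.smul_apply]
    exact Or.inl rfl
  have hru : r = ∑ k, conj (x p k) * x p k := by simp [hrdef, dotProduct, Complex.star_def]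
  constructor
  · intro i j
    rw [Matrix.mul_apply]
    have : ∀ k, X p i k * pdp X p k j
        = (r⁻¹ * x p i * (conj (x p j) * (-(r ^ 2)⁻¹ * Wp) + r⁻¹ * conj (vpdm x p j)))
            * (conj (x p k) * x p k)
          + (r⁻¹ * x p i * r⁻¹ * conj (x p j)) * (conj (x p k) * z k) := by
      intro k
      rw [hXv, hpdp]
      ring
    rw [Finset.sum_congr rfl fun k _ => this k, Finset.sum_add_distrib, ← Finset.mul_sum,
      ← Finset.mul_sum, ← hru, ← hSmdef]
    rw [hWp]
    have h1 : r * r⁻¹ = 1 := mul_inv_cancel₀ hr0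
    linear_combination (x p i * conj (vpdm x p j) * r⁻¹
      - x p i * conj (x p j) * (Sm + conj S) * r⁻¹ ^ 2) * h1
  · intro i j
    rw [Matrix.mul_apply]
    have : ∀ k, pdm X p i k * X p k j
        = (r⁻¹ * conj (x p j) * (x p i * (-(r ^ 2)⁻¹ * Wm) + r⁻¹ * vpdm x p i))
            * (conj (x p k) * x p k)
          + (r⁻¹ * conj (x p j) * r⁻¹ * x p i) * (zc k * x p k) := by
      intro k
      rw [hXv, hpdm]
      ring
    rw [Finset.sum_congr rfl fun k _ => this k, Finset.sum_add_distrib, ← Finset.mul_sum,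
      ← Finset.mul_sum, ← hru, ← hSmc]
    rw [hWm]
    have h1 : r * r⁻¹ = 1 := mul_inv_cancel₀ hr0
    linear_combination (conj (x p j) * vpdm x p i * r⁻¹
      - conj (x p j) * x p i * (S + conj Sm) * r⁻¹ ^ 2) * h1


/-- For the rank-1 projector family `X = (x ⊗ x†)/(x† x)` attached to a nonvanishing
differentiable vector family `x`: `x` is holomorphic in `ℂPᴺ⁻¹` iff `X ∂₊X = 0`, which is
also equivalent to `(∂₋X) X = 0`. -/
theorem holomorphic_iff_projector_eq {N : ℕ} (x : ℝ × ℝ → Fin N → ℂ)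
    (hdiff : ∀ i, Differentiable ℝ fun q => x q i)
    (hx : ∀ p, x p ≠ 0)
    (X : ℝ × ℝ → Matrix (Fin N) (Fin N) ℂ)
    (hX : ∀ p, X p = (star (x p) ⬝ᵥ x p)⁻¹ • vecMulVec (x p) (star (x p))) :
    ((∀ p, ∃ k : ℂ, vpdm x p = k • x p) ↔ ∀ p, X p * pdp X p = 0) ∧
      ((∀ p, X p * pdp X p = 0) ↔ ∀ p, pdm X p * X p = 0) := by
  have hpt : ∀ p, ((∃ k : ℂ, vpdm x p = k • x p) ↔
        vpdm x p = ((star (x p) ⬝ᵥ x p)⁻¹ * (star (x p) ⬝ᵥ vpdm x p)) • x p) ∧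
      (X p * pdp X p = 0 ↔
        vpdm x p = ((star (x p) ⬝ᵥ x p)⁻¹ * (star (x p) ⬝ᵥ vpdm x p)) • x p) ∧
      (pdm X p * X p = 0 ↔
        vpdm x p = ((star (x p) ⬝ᵥ x p)⁻¹ * (star (x p) ⬝ᵥ vpdm x p)) • x p) := by
    intro p
    have hr0 := aux_r_ne (x p) (hx p)
    have hrc := aux_r_conj (x p)
    obtain ⟨h1, h2⟩ := aux_key x hdiff hx X hX p hr0 hrc
    refine ⟨⟨?_, fun h => ⟨_, h⟩⟩, ⟨?_, ?_⟩, ⟨?_, ?_⟩⟩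
    · rintro ⟨k, hk⟩
      have hSk : star (x p) ⬝ᵥ vpdm x p = k * (star (x p) ⬝ᵥ x p) := by
        rw [hk]; simp [dotProduct_smul, smul_eq_mul]
      rw [hSk, hk]
      congr 1
      field_simp
    · intro h
      obtain ⟨i, hi⟩ := Function.ne_iff.mp (hx p)
      funext j
      have e := h1 i j
      rw [h, Matrix.zero_apply] at e
      have e2 : (starRingEnd ℂ) (vpdm x p j) - (star (x p) ⬝ᵥ x p)⁻¹ *
          (starRingEnd ℂ) (star (x p) ⬝ᵥ vpdm x p) * (starRingEnd ℂ) (x p j) = 0 := by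
        rcases mul_eq_zero.mp e.symm with h' | h'
        · rcases mul_eq_zero.mp h' with h'' | h''
          · exact absurd h'' (inv_ne_zero hr0)
          · exact absurd h'' hi
        · exact h'
      have e3 := congrArg (starRingEnd ℂ) e2
      simp only [_root_.map_sub, _root_.map_mul, map_inv₀, Complex.conj_conj, map_zero,
        hrc] at e3
      rw [sub_eq_zero] at e3
      rw [Pi.smul_apply, smul_eq_mul, e3]
    · intro h
      ext i j
      rw [h1 i j, Matrix.zero_apply]
      have hyj : vpdm x p j
          = ((star (x p) ⬝ᵥ x p)⁻¹ * (star (x p) ⬝ᵥ vpdm x p)) * x p j := by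
        conv_lhs => rw [h]
        rw [Pi.smul_apply, smul_eq_mul]
      rw [hyj]
      simp only [_root_.map_mul, map_inv₀, hrc]
      ring
    · intro h
      obtain ⟨j, hj⟩ := Function.ne_iff.mp (hx p)
      funext i
      have e := h2 i j
      rw [h, Matrix.zero_apply] at e
      have hcj : (starRingEnd ℂ) (x p j) ≠ 0 := by
        simpa using hj
      have e2 : vpdm x p i - (star (x p) ⬝ᵥ x p)⁻¹ * (star (x p) ⬝ᵥ vpdm x p) * x p i = 0 := by
        rcases mul_eq_zero.mp e.symm with h' | h'
        · rcases mul_eq_zero.mp h' with h'' | h''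
          · exact absurd h'' (inv_ne_zero hr0)
          · exact absurd h'' hcj
        · exact h'
      rw [sub_eq_zero] at e2
      rw [Pi.smul_apply, smul_eq_mul, e2]
    · intro h
      ext i j
      rw [h2 i j, Matrix.zero_apply]
      have hyi : vpdm x p i
          = ((star (x p) ⬝ᵥ x p)⁻¹ * (star (x p) ⬝ᵥ vpdm x p)) * x p i := by
        conv_lhs => rw [h]
        rw [Pi.smul_apply, smul_eq_mul]
      rw [hyi]
      ring
  constructor
  · exact ⟨fun h p => ((hpt p).2.1).mpr (((hpt p).1).mp (h p)),
      fun h p => ⟨_, ((hpt p).2.1).mp (h p)⟩⟩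
  · exact ⟨fun h p => ((hpt p).2.2).mpr (((hpt p).2.1).mp (h p)),
      fun h p => ((hpt p).2.1).mpr (((hpt p).2.2).mp (h p))⟩
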